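/- arXiv:2109.05384 — 3 statements merged into one kernel-verified Lean document; each statement's English description precedes it below -/
import Mathlib

section
/- Let H := (L²([−1,1];ℂ)) × ℂ^d and let T : ℂ^m → H be a continuous linear map given in SVD form: there are an orthonormal basis (v_i)_{i=0}^{m−1} of ℂ^m, an orthonormal family (u_i)_{i=0}^{m−1} in H, and a nonincreasing sequence σ_0 ≥ σ_1 ≥ … ≥ σ_{m−1} ≥ 0 such that T x = Σ_{i=0}^{m−1} σ_i ⟨v_i, x⟩ u_i. Fix k with 1 ≤ k ≤ m−1 and suppose the strict gap σ_{k−1} > σ_k holds. Then the best rank-k approximation of T in the Frobenius norm is unique: if S : ℂ^m → H is continuous linear with range of dimension at most k and ‖T − S‖_F² = Σ_{i=k}^{m−1} σ_i², then S equals the truncation T_k, where T_k x := Σ_{i=0}^{k−1} σ_i ⟨v_i, x⟩ u_i. -/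
open MeasureTheory

/-- The Hilbert space `H := L²([-1,1];ℂ) × ℂ^d` with the natural (ℓ²-product)
Hilbert-space structure. -/
noncomputable abbrev Hsp (d : ℕ) : Type :=
  WithLp 2 ((Lp ℂ 2 (volume.restrict (Set.Icc (-1:ℝ) 1))) × EuclideanSpace ℂ (Fin d))

private lemma sum_norm_sq_map_eq {E F : Type*} [NormedAddCommGroup E] [InnerProductSpace ℂ E]
    [NormedAddCommGroup F] [InnerProductSpace ℂ F] [CompleteSpace E] [CompleteSpace F]
    {ι κ : Type*} [Fintype ι] [Fintype κ]
    (a : OrthonormalBasis ι ℂ E) (b : OrthonormalBasis κ ℂ E) (L : E →L[ℂ] F) :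
    ∑ i, ‖L (a i)‖ ^ 2 = ∑ j, ‖L (b j)‖ ^ 2 := by
  have key : ∀ (x : E), (inner ℂ x ((ContinuousLinearMap.adjoint L) (L x)) : ℂ) = ((‖L x‖ : ℂ))^2 := by
    intro x
    rw [ContinuousLinearMap.adjoint_inner_right, inner_self_eq_norm_sq_to_K]; norm_num
  have main : ∑ i, ((‖L (a i)‖ : ℂ))^2 = ∑ j, ((‖L (b j)‖ : ℂ))^2 := by
    calc ∑ i, ((‖L (a i)‖:ℂ))^2
        = ∑ i, (inner ℂ (a i) ((ContinuousLinearMap.adjoint L) (L (a i))) : ℂ) := by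
          simp [key]
      _ = ∑ i, ∑ j, (inner ℂ (a i) (b j) : ℂ) * inner ℂ (b j) ((ContinuousLinearMap.adjoint L) (L (a i))) := by
          refine Finset.sum_congr rfl fun i _ => ?_
          rw [b.sum_inner_mul_inner]
      _ = ∑ j, ∑ i, (starRingEnd ℂ) ((inner ℂ (b j) (a i) : ℂ) * inner ℂ (a i) ((ContinuousLinearMap.adjoint L) (L (b j)))) := by
          rw [Finset.sum_comm]
          refine Finset.sum_congr rfl fun j _ => Finset.sum_congr rfl fun i _ => ?_
          rw [map_mul, inner_conj_symm]
          congr 1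
          rw [ContinuousLinearMap.adjoint_inner_right, ContinuousLinearMap.adjoint_inner_right,
            inner_conj_symm]
      _ = ∑ j, ((‖L (b j)‖:ℂ))^2 := by
          refine Finset.sum_congr rfl fun j _ => ?_
          rw [← map_sum, a.sum_inner_mul_inner, key]
          simp [← Complex.ofReal_pow]
  exact_mod_cast main

private lemma parseval_sq {E : Type*} [NormedAddCommGroup E] [InnerProductSpace ℂ E]
    {ι : Type*} [Fintype ι] (b : OrthonormalBasis ι ℂ E) (x : E) :
    ∑ i, ‖(inner ℂ (b i) x : ℂ)‖ ^ 2 = ‖x‖ ^ 2 := by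
  have h := b.sum_inner_mul_inner x x
  have h2 : ∀ i : ι, (inner ℂ x (b i) : ℂ) * inner ℂ (b i) x = ((‖(inner ℂ (b i) x : ℂ)‖ : ℂ))^2 := by
    intro i; rw [← inner_conj_symm x (b i), RCLike.conj_mul]; norm_num
  rw [Finset.sum_congr rfl (fun i _ => h2 i), inner_self_eq_norm_sq_to_K] at h
  have h4 : ((∑ i, ‖(inner ℂ (b i) x : ℂ)‖^2 : ℝ) : ℂ) = ((‖x‖^2 : ℝ) : ℂ) := by
    push_cast; exact h
  exact_mod_cast h4

private lemma norm_sq_orthonormal_sum {F : Type*} [NormedAddCommGroup F] [InnerProductSpace ℂ F]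
    {ι : Type*} [Fintype ι] {u : ι → F} (hu : Orthonormal ℂ u) (c : ι → ℂ) :
    ‖∑ i, c i • u i‖ ^ 2 = ∑ i, ‖c i‖ ^ 2 := by
  have h := hu.inner_sum c c Finset.univ
  rw [inner_self_eq_norm_sq_to_K] at h
  have h2 : ∀ i : ι, (starRingEnd ℂ) (c i) * c i = ((‖c i‖ : ℂ))^2 := by
    intro i; rw [RCLike.conj_mul]; norm_num
  rw [Finset.sum_congr rfl (fun i _ => h2 i)] at h
  have h4 : ((‖∑ i, c i • u i‖^2 : ℝ) : ℂ) = ((∑ i, ‖c i‖^2 : ℝ) : ℂ) := by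
    push_cast; exact h
  exact_mod_cast h4

set_option maxHeartbeats 0
set_option synthInstance.maxHeartbeats 400000

/-- Uniqueness of the best rank-`k` approximation of a
quasimatrix-matrix `T : ℂ^m → H` (given in SVD form) under the strict gap
`σ_{k-1} > σ_k`: any rank-`≤ k` map `S` attaining the optimal Frobenius error
`Σ_{i≥k} σ_i²` equals the truncation `T_k`. -/
theorem stmt2 (m d k : ℕ) (hk1 : 1 ≤ k) (hk2 : k ≤ m - 1)
    (T Tk : EuclideanSpace ℂ (Fin m) →L[ℂ] Hsp d)
    (v : Fin m → EuclideanSpace ℂ (Fin m)) (hv : Orthonormal ℂ v)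
    (u : Fin m → Hsp d) (hu : Orthonormal ℂ u)
    (σ : Fin m → ℝ) (hσmono : Antitone σ) (hσ0 : ∀ i, 0 ≤ σ i)
    (hT : ∀ x, T x = ∑ i, ((σ i : ℂ) * inner ℂ (v i) x) • u i)
    (hTk : ∀ x, Tk x = ∑ i ∈ Finset.univ.filter (fun i : Fin m => (i : ℕ) < k),
      ((σ i : ℂ) * inner ℂ (v i) x) • u i)
    (hgap : σ ⟨k, by omega⟩ < σ ⟨k - 1, by omega⟩)
    (S : EuclideanSpace ℂ (Fin m) →L[ℂ] Hsp d)
    (hS : Module.finrank ℂ (LinearMap.range (S : EuclideanSpace ℂ (Fin m) →ₗ[ℂ] Hsp d)) ≤ k)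
    (hopt : ∑ i, ‖(T - S) (EuclideanSpace.single i 1)‖ ^ 2
        = ∑ i ∈ Finset.univ.filter (fun i : Fin m => k ≤ (i : ℕ)), σ i ^ 2) :
    S = Tk := by
  classical
  have hkm : k + 1 ≤ m := by omega
  set K : Submodule ℂ (EuclideanSpace ℂ (Fin m)) := LinearMap.ker (S : (EuclideanSpace ℂ (Fin m)) →ₗ[ℂ] Hsp d) with hKdef
  set nK := Module.finrank ℂ K with hnKdef
  set nP := Module.finrank ℂ Kᗮ with hnPdef
  set bK := stdOrthonormalBasis ℂ K with hbKdef
  set bP := stdOrthonormalBasis ℂ Kᗮ with hbPdef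
  set L : (EuclideanSpace ℂ (Fin m)) →L[ℂ] Hsp d := T - S with hLdef
  -- membership facts
  have hmemK : ∀ x : (EuclideanSpace ℂ (Fin m)), x ∈ K ↔ S x = 0 := by
    intro x; rw [hKdef, LinearMap.mem_ker]; rfl
  -- the combined orthonormal family
  set w : Fin nK ⊕ Fin nP → (EuclideanSpace ℂ (Fin m)) :=
    Sum.elim (fun j => (bK j : (EuclideanSpace ℂ (Fin m)))) (fun j => (bP j : (EuclideanSpace ℂ (Fin m)))) with hwdef
  have honw : Orthonormal ℂ w := by
    rw [orthonormal_iff_ite]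
    have hbk := orthonormal_iff_ite.mp bK.orthonormal
    have hbp := orthonormal_iff_ite.mp bP.orthonormal
    rintro (i | i) (j | j)
    · have := hbk i j
      rw [Submodule.coe_inner] at this
      simpa [hwdef] using this
    · simp only [hwdef, Sum.elim_inl, Sum.elim_inr]
      rw [Submodule.inner_right_of_mem_orthogonal (bK i).2 (bP j).2]
      simp
    · simp only [hwdef, Sum.elim_inl, Sum.elim_inr]
      rw [Submodule.inner_left_of_mem_orthogonal (bK j).2 (bP i).2]
      simp
    · have := hbp i j
      rw [Submodule.coe_inner] at this
      simpa [hwdef] using this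
  -- spans
  have hKspan : Submodule.span ℂ (Set.range (fun j : Fin nK => (bK j : (EuclideanSpace ℂ (Fin m))))) = K := by
    have hr : Set.range (fun j : Fin nK => (bK j : (EuclideanSpace ℂ (Fin m)))) = K.subtype '' (Set.range bK) := by
      rw [← Set.range_comp]; rfl
    rw [hr, Submodule.span_image, ← OrthonormalBasis.coe_toBasis bK, Module.Basis.span_eq,
      Submodule.map_subtype_top]
  have hPspan : Submodule.span ℂ (Set.range (fun j : Fin nP => (bP j : (EuclideanSpace ℂ (Fin m))))) = Kᗮ := by
    have hr : Set.range (fun j : Fin nP => (bP j : (EuclideanSpace ℂ (Fin m)))) = Kᗮ.subtype '' (Set.range bP) := by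
      rw [← Set.range_comp]; rfl
    rw [hr, Submodule.span_image, ← OrthonormalBasis.coe_toBasis bP, Module.Basis.span_eq,
      Submodule.map_subtype_top]
  have hspanw : Submodule.span ℂ (Set.range w) = ⊤ := by
    rw [hwdef, Set.Sum.elim_range, Submodule.span_union, hKspan, hPspan]
    exact Submodule.sup_orthogonal_of_hasOrthogonalProjection
  set wB : OrthonormalBasis (Fin nK ⊕ Fin nP) ℂ (EuclideanSpace ℂ (Fin m)) :=
    OrthonormalBasis.mkOfOrthogonalEqBot honw
      (by rw [hspanw, Submodule.top_orthogonal_eq_bot]) with hwBdef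
  have hwB : ⇑wB = w := OrthonormalBasis.coe_of_orthogonal_eq_bot_mk honw _
  -- Frobenius rearrangement
  have hfro : ∑ i, ‖L (EuclideanSpace.single i 1)‖ ^ 2
      = (∑ j, ‖L (bK j : (EuclideanSpace ℂ (Fin m)))‖ ^ 2) + ∑ j, ‖L (bP j : (EuclideanSpace ℂ (Fin m)))‖ ^ 2 := by
    have h1 := sum_norm_sq_map_eq (EuclideanSpace.basisFun (Fin m) ℂ) wB L
    rw [Fintype.sum_sum_type] at h1
    simp only [hwB, hwdef, Sum.elim_inl, Sum.elim_inr, EuclideanSpace.basisFun_apply] at h1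
    exact h1
  -- rank-nullity
  have hnrank : Module.finrank ℂ (LinearMap.range (S : (EuclideanSpace ℂ (Fin m)) →ₗ[ℂ] Hsp d)) + nK = m := by
    have h := LinearMap.finrank_range_add_finrank_ker (S : (EuclideanSpace ℂ (Fin m)) →ₗ[ℂ] Hsp d)
    rwa [finrank_euclideanSpace_fin] at h
  have hnK : m ≤ k + nK := by omega
  have hnP : nK + nP = m := by
    have h := Submodule.finrank_add_finrank_orthogonal K
    rwa [finrank_euclideanSpace_fin] at h
  -- norm formula for T
  have hTnorm : ∀ x : (EuclideanSpace ℂ (Fin m)), ‖T x‖ ^ 2 = ∑ i, (σ i)^2 * ‖(inner ℂ (v i) x : ℂ)‖^2 := by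
    intro x
    rw [hT x, norm_sq_orthonormal_sum hu]
    refine Finset.sum_congr rfl fun i _ => ?_
    rw [norm_mul, mul_pow, Complex.norm_real, Real.norm_eq_abs, abs_of_nonneg (hσ0 i)]
  set c : Fin m → ℝ := fun i => ∑ j, ‖(inner ℂ (v i) ((bK j : (EuclideanSpace ℂ (Fin m)))) : ℂ)‖^2 with hcdef
  have hc0 : ∀ i, 0 ≤ c i := fun i => Finset.sum_nonneg fun j _ => by positivity
  have honK : Orthonormal ℂ (fun j : Fin nK => (bK j : (EuclideanSpace ℂ (Fin m)))) := by
    have h := honw.comp Sum.inl Sum.inl_injective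
    convert h using 1
    rfl
  have hc1 : ∀ i, c i ≤ 1 := by
    intro i
    have hb := honK.sum_inner_products_le (v i) (s := Finset.univ)
    rw [hv.1 i, one_pow] at hb
    calc c i = ∑ j, ‖(inner ℂ ((bK j : (EuclideanSpace ℂ (Fin m)))) (v i) : ℂ)‖^2 :=
          Finset.sum_congr rfl fun j _ => by rw [norm_inner_symm]
      _ ≤ 1 := hb
  haveI : Nonempty (Fin m) := ⟨⟨0, by omega⟩⟩
  have hvspan : Submodule.span ℂ (Set.range v) = ⊤ :=
    hv.linearIndependent.span_eq_top_of_card_eq_finrank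
      (by simp [finrank_euclideanSpace_fin])
  set vB : OrthonormalBasis (Fin m) ℂ (EuclideanSpace ℂ (Fin m)) := OrthonormalBasis.mk hv hvspan.ge with hvBdef
  have hvB : ⇑vB = v := OrthonormalBasis.coe_mk _ _
  have hcsum : ∑ i, c i = (nK : ℝ) := by
    calc ∑ i, c i = ∑ j : Fin nK, ∑ i : Fin m, ‖(inner ℂ (v i) ((bK j : (EuclideanSpace ℂ (Fin m)))) : ℂ)‖^2 :=
          Finset.sum_comm
      _ = ∑ j : Fin nK, ‖((bK j : (EuclideanSpace ℂ (Fin m))))‖^2 := by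
          refine Finset.sum_congr rfl fun j _ => ?_
          have h := parseval_sq vB ((bK j : (EuclideanSpace ℂ (Fin m))))
          rw [hvB] at h
          exact h
      _ = (nK : ℝ) := by
          have hn : ∀ j : Fin nK, ‖((bK j : (EuclideanSpace ℂ (Fin m))))‖ = 1 := by
            intro j
            rw [Submodule.norm_coe]
            exact bK.orthonormal.1 j
          simp [hn]
  have hsum1 : ∑ j, ‖L (bK j : (EuclideanSpace ℂ (Fin m)))‖^2 = ∑ i, (σ i)^2 * c i := by
    have hLK : ∀ j : Fin nK, L ((bK j : (EuclideanSpace ℂ (Fin m)))) = T ((bK j : (EuclideanSpace ℂ (Fin m)))) := by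
      intro j
      have h0 : S ((bK j : (EuclideanSpace ℂ (Fin m)))) = 0 := (hmemK _).mp (bK j).2
      rw [hLdef]
      simp [h0]
    calc ∑ j, ‖L (bK j : (EuclideanSpace ℂ (Fin m)))‖^2
        = ∑ j, ∑ i, (σ i)^2 * ‖(inner ℂ (v i) ((bK j : (EuclideanSpace ℂ (Fin m)))) : ℂ)‖^2 := by
          refine Finset.sum_congr rfl fun j _ => ?_
          rw [hLK j, hTnorm]
      _ = ∑ i, (σ i)^2 * c i := by
          rw [Finset.sum_comm]
          exact Finset.sum_congr rfl fun i _ => (Finset.mul_sum _ _ _).symm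
  -- filters
  set Sk := Finset.univ.filter (fun i : Fin m => (i:ℕ) < k) with hSkdef
  set Sk' := Finset.univ.filter (fun i : Fin m => k ≤ (i:ℕ)) with hSk'def
  have hsplit : ∀ f : Fin m → ℝ, ∑ i, f i = (∑ i ∈ Sk, f i) + ∑ i ∈ Sk', f i := by
    intro f
    rw [hSkdef, hSk'def,
      ← Finset.sum_filter_add_sum_filter_not Finset.univ (fun i : Fin m => (i:ℕ) < k) f]
    congr 1
    apply Finset.sum_congr _ (fun _ _ => rfl)
    apply Finset.filter_congr; intro i _; simp [not_lt]
  have hSkcard : Sk.card = k := by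
    have : Sk = Finset.map (Fin.castLEEmb (by omega : k ≤ m)) Finset.univ := by
      ext i
      simp only [hSkdef, Finset.mem_filter, Finset.mem_univ, true_and, Finset.mem_map,
        Fin.castLEEmb_apply]
      constructor
      · intro hi; exact ⟨⟨i.1, hi⟩, by ext; simp⟩
      · rintro ⟨a, rfl⟩; simpa using a.2
    rw [this, Finset.card_map, Finset.card_univ, Fintype.card_fin]
  have hSk'card : Sk'.card = m - k := by
    have h2 := Finset.card_filter_add_card_filter_not
      (s := (Finset.univ : Finset (Fin m))) (p := fun i : Fin m => (i:ℕ) < k)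
    have h3 : Finset.univ.filter (fun i : Fin m => ¬ (i:ℕ) < k) = Sk' := by
      apply Finset.filter_congr; intro i _; simp [not_lt]
    rw [h3] at h2
    rw [hSkdef] at hSkcard
    simp only [Finset.card_univ, Fintype.card_fin] at h2
    omega
  -- the scalar quantities
  set σk : ℝ := σ ⟨k, by omega⟩ with hσkdef
  set σk1 : ℝ := σ ⟨k - 1, by omega⟩ with hσk1def
  set A : ℝ := ∑ i ∈ Sk, c i with hAdef
  set B : ℝ := ∑ i ∈ Sk', (1 - c i) with hBdef
  set ε : ℝ := ∑ j, ‖L ((bP j : (EuclideanSpace ℂ (Fin m))))‖^2 with hεdef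
  have hσk0 : (0:ℝ) ≤ σk := hσ0 _
  have hσk10 : (0:ℝ) ≤ σk1 := hσ0 _
  have hgap2 : σk^2 < σk1^2 := by nlinarith [hσk0, hgap]
  have hε0 : 0 ≤ ε := Finset.sum_nonneg fun j _ => by positivity
  have hA0 : 0 ≤ A := Finset.sum_nonneg fun i _ => hc0 i
  have hB0 : 0 ≤ B := Finset.sum_nonneg fun i _ => by linarith [hc1 i]
  have hABge : B ≤ A := by
    have h1 : A + ∑ i ∈ Sk', c i = (nK:ℝ) := by rw [hAdef, ← hsplit c, hcsum]
    have h2 : B = (Sk'.card : ℝ) - ∑ i ∈ Sk', c i := by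
      rw [hBdef, Finset.sum_sub_distrib, Finset.sum_const, nsmul_eq_mul, mul_one]
    have h3 : ((m - k : ℕ) : ℝ) ≤ (nK : ℝ) := Nat.cast_le.mpr (by omega)
    rw [h2, hSk'card]
    have h4 : ((m - k : ℕ) : ℝ) = (m : ℝ) - k := by
      rw [Nat.cast_sub (by omega)]
    linarith [h4 ▸ h3]
  have hI1 : σk1^2 * A ≤ ∑ i ∈ Sk, (σ i)^2 * c i := by
    rw [hAdef, Finset.mul_sum]
    apply Finset.sum_le_sum
    intro i hi
    have hik : (i:ℕ) < k := by
      have := Finset.mem_filter.mp (hSkdef ▸ hi)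
      exact this.2
    have hle : σk1 ≤ σ i := by
      apply hσmono
      rw [Fin.le_def]
      simp only
      omega
    have hsq : σk1^2 ≤ (σ i)^2 := pow_le_pow_left₀ hσk10 hle 2
    exact mul_le_mul_of_nonneg_right hsq (hc0 i)
  have hI2 : ∑ i ∈ Sk', (σ i)^2 * (1 - c i) ≤ σk^2 * B := by
    rw [hBdef, Finset.mul_sum]
    apply Finset.sum_le_sum
    intro i hi
    have hik : k ≤ (i:ℕ) := by
      have := Finset.mem_filter.mp (hSk'def ▸ hi)
      exact this.2
    have hle : σ i ≤ σk := by
      apply hσmono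
      rw [Fin.le_def]
      simp only
      omega
    have hsq : (σ i)^2 ≤ σk^2 := pow_le_pow_left₀ (hσ0 i) hle 2
    exact mul_le_mul_of_nonneg_right hsq (by linarith [hc1 i])
  have hmain : (∑ i, (σ i)^2 * c i) + ε = ∑ i ∈ Sk', σ i ^2 := by
    have h := hopt
    rw [hfro, hsum1] at h
    exact h
  have hsum2 : ∑ i, (σ i)^2 * c i
      = (∑ i ∈ Sk, (σ i)^2 * c i) + ∑ i ∈ Sk', (σ i)^2 * c i := hsplit _
  have hSk'sub : ∑ i ∈ Sk', (σ i)^2 * c i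
      = (∑ i ∈ Sk', σ i ^ 2) - ∑ i ∈ Sk', (σ i)^2 * (1 - c i) := by
    rw [← Finset.sum_sub_distrib]
    exact Finset.sum_congr rfl fun i _ => by ring
  have hkey : σk1^2 * A - σk^2 * B + ε ≤ 0 := by linarith
  have h5 : σk^2 * (A - B) ≤ σk1^2 * A - σk^2 * B := by
    nlinarith [mul_le_mul_of_nonneg_right (le_of_lt hgap2) hA0]
  have h6 : 0 ≤ σk^2 * (A - B) := mul_nonneg (sq_nonneg _) (by linarith)
  have hεzero : ε = 0 := by linarith
  have h7 : σk1^2 * A - σk^2 * B = 0 := by linarith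
  have h8 : σk^2 * (A - B) = 0 := by linarith
  have h9 : (σk1^2 - σk^2) * A = 0 := by linear_combination h7 - h8
  have hAzero : A = 0 := by
    rcases mul_eq_zero.mp h9 with h | h
    · exfalso
      linarith
    · exact h
  -- consequences of equality
  have hczero : ∀ i ∈ Sk, c i = 0 :=
    (Finset.sum_eq_zero_iff_of_nonneg (fun i _ => hc0 i)).mp hAzero
  have hLP : ∀ j : Fin nP, L ((bP j : (EuclideanSpace ℂ (Fin m)))) = 0 := by
    intro j
    have h := (Finset.sum_eq_zero_iff_of_nonneg
      (fun j (_ : j ∈ Finset.univ) => by positivity)).mp hεzero j (Finset.mem_univ _)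
    simpa [pow_eq_zero_iff] using h
  have hinner0 : ∀ i ∈ Sk, ∀ j : Fin nK,
      (inner ℂ (v i) ((bK j : (EuclideanSpace ℂ (Fin m)))) : ℂ) = 0 := by
    intro i hi j
    have h := (Finset.sum_eq_zero_iff_of_nonneg
      (fun j (_ : j ∈ Finset.univ) => by positivity)).mp (hczero i hi) j (Finset.mem_univ _)
    simpa [pow_eq_zero_iff] using h
  have hvP : ∀ i : Fin m, (i:ℕ) < k → v i ∈ Kᗮ := by
    intro i hik
    rw [Submodule.mem_orthogonal']
    intro x hx
    rw [← hKspan] at hx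
    have hsub : Submodule.span ℂ (Set.range (fun j : Fin nK => ((bK j : (EuclideanSpace ℂ (Fin m))))))
        ≤ LinearMap.ker (innerSL ℂ (v i) : (EuclideanSpace ℂ (Fin m)) →ₗ[ℂ] ℂ) := by
      rw [Submodule.span_le]
      rintro _ ⟨j, rfl⟩
      have hs : i ∈ Sk := by rw [hSkdef]; simp [hik]
      simpa [LinearMap.mem_ker] using hinner0 i hs j
    have := hsub hx
    simpa [LinearMap.mem_ker] using this
  have hSP : ∀ x ∈ Kᗮ, S x = T x := by
    intro x hx
    rw [← hPspan] at hx
    have hsub : Submodule.span ℂ (Set.range (fun j : Fin nP => ((bP j : (EuclideanSpace ℂ (Fin m))))))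
        ≤ LinearMap.ker (L : (EuclideanSpace ℂ (Fin m)) →ₗ[ℂ] Hsp d) := by
      rw [Submodule.span_le]
      rintro _ ⟨j, rfl⟩
      simpa [LinearMap.mem_ker] using hLP j
    have h := hsub hx
    rw [LinearMap.mem_ker] at h
    have h2 : T x - S x = 0 := by
      have : L x = T x - S x := by rw [hLdef]; simp
      rw [← this]; exact h
    have h3 : S x = T x - (T x - S x) := by abel
    rw [h3, h2, sub_zero]
  -- identify Kᗮ with the span of the first k singular vectors
  set g : Fin k → (EuclideanSpace ℂ (Fin m)) := fun j => v ⟨(j:ℕ), by omega⟩ with hgdef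
  have hg_inj : Function.Injective (fun j : Fin k => (⟨(j:ℕ), by omega⟩ : Fin m)) := by
    intro a b h
    have : (a : ℕ) = (b : ℕ) := by simpa [Fin.ext_iff] using h
    exact Fin.ext this
  have hgind : LinearIndependent ℂ g := hv.linearIndependent.comp _ hg_inj
  set Q : Submodule ℂ (EuclideanSpace ℂ (Fin m)) := Submodule.span ℂ (Set.range g) with hQdef
  have hQle : Q ≤ Kᗮ := by
    rw [hQdef, Submodule.span_le]
    rintro _ ⟨j, rfl⟩
    exact hvP _ j.2
  have hQrank : Module.finrank ℂ Q = k := by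
    rw [hQdef, finrank_span_eq_card hgind, Fintype.card_fin]
  have hQ : Q = Kᗮ := by
    apply Submodule.eq_of_le_of_finrank_le hQle
    rw [hQrank]
    omega
  have hvKmem : ∀ i : Fin m, k ≤ (i:ℕ) → v i ∈ K := by
    intro i hik
    have h1 : v i ∈ Qᗮ := by
      rw [Submodule.mem_orthogonal']
      intro x hx
      rw [hQdef] at hx
      have hsub : Submodule.span ℂ (Set.range g) ≤ LinearMap.ker (innerSL ℂ (v i) : (EuclideanSpace ℂ (Fin m)) →ₗ[ℂ] ℂ) := by
        rw [Submodule.span_le]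
        rintro _ ⟨j, rfl⟩
        have hne : i ≠ (⟨(j:ℕ), by omega⟩ : Fin m) := by
          intro h
          have : (i:ℕ) = (j:ℕ) := by rw [h]
          omega
        simpa [LinearMap.mem_ker, hgdef] using hv.2 hne
      have := hsub hx
      simpa [LinearMap.mem_ker] using this
    rw [← Submodule.orthogonal_orthogonal K, ← hQ]
    exact h1
  -- final identification
  refine ContinuousLinearMap.ext fun x => ?_
  have hdec : ((K.orthogonalProjection x : K) : (EuclideanSpace ℂ (Fin m))) + ((Kᗮ.orthogonalProjection x : Kᗮ) : (EuclideanSpace ℂ (Fin m))) = x :=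
    K.starProjection_add_starProjection_orthogonal x
  set y : (EuclideanSpace ℂ (Fin m)) := (K.orthogonalProjection x : (EuclideanSpace ℂ (Fin m))) with hydef
  set z : (EuclideanSpace ℂ (Fin m)) := (Kᗮ.orthogonalProjection x : (EuclideanSpace ℂ (Fin m))) with hzdef
  have hy : y ∈ K := (K.orthogonalProjection x).2
  have hz : z ∈ Kᗮ := (Kᗮ.orthogonalProjection x).2
  have hSx : S x = T z := by
    have h1 : S x = S y + S z := by rw [← map_add, hdec]
    rw [h1, (hmemK y).mp hy, zero_add, hSP z hz]
  rw [hSx, hTk x, hT z]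
  have hzero : ∀ i ∈ Finset.univ.filter (fun i : Fin m => ¬ (i:ℕ) < k),
      ((σ i : ℂ) * inner ℂ (v i) z) • u i = 0 := by
    intro i hi
    have hik : k ≤ (i:ℕ) := by
      have := (Finset.mem_filter.mp hi).2
      omega
    have h0 : (inner ℂ (v i) z : ℂ) = 0 :=
      Submodule.inner_right_of_mem_orthogonal (hvKmem i hik) hz
    simp [h0]
  have hxz : ∀ i ∈ Sk, (inner ℂ (v i) z : ℂ) = inner ℂ (v i) x := by
    intro i hi
    have hik : (i:ℕ) < k := by
      have h := hi
      rw [hSkdef] at h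
      exact (Finset.mem_filter.mp h).2
    have h1 : (inner ℂ (v i) y : ℂ) = 0 :=
      Submodule.inner_left_of_mem_orthogonal hy (hvP i hik)
    have h2 : (inner ℂ (v i) x : ℂ) = inner ℂ (v i) y + inner ℂ (v i) z := by
      rw [← inner_add_right, hdec]
    rw [h2, h1, zero_add]
  rw [← Finset.sum_filter_add_sum_filter_not Finset.univ (fun i : Fin m => (i:ℕ) < k)
    (fun i => ((σ i : ℂ) * inner ℂ (v i) z) • u i)]
  rw [Finset.sum_eq_zero hzero, add_zero]
  exact Finset.sum_congr rfl fun i hi => by rw [hxz i hi]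
end

section
/- Let H := (L²([−1,1];ℂ)) × ℂ^d, let A, B : ℂ^n → H be continuous linear maps, and let M : ℂ^{2n} → H be the concatenation [B A], M(x,y) := B x + A y. Suppose M has the SVD M = U ∘ Σ ∘ V*, meaning: U : ℂ^{2n} → H is continuous linear with U* ∘ U = id, V ∈ ℂ^{2n×2n} is unitary, Σ = diag(σ_0, …, σ_{2n−1}) with σ_0 ≥ σ_1 ≥ … ≥ σ_{2n−1} ≥ 0, and M w = U(Σ (V* w)) for all w. Partition V into n×n blocks V = [[V₁₁, V₁₂],[V₂₁, V₂₂]] (V₁₁ the top-left block). If σ_min(B) > σ_n (where σ_min(B) := inf_{‖x‖=1} ‖Bx‖ and indices start at 0, so σ_n is the (n+1)-st singular value of M), then V₁₁ and V₂₂ are invertible matrices and σ_{n−1} > σ_n. -/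
open MeasureTheory Matrix

/-- The smallest singular value `σ_min(B) := inf { ‖B x‖ : ‖x‖ = 1 }`. -/
noncomputable def sigMin {n d : ℕ} (B : EuclideanSpace ℂ (Fin n) →L[ℂ] Hsp d) : ℝ :=
  sInf ((fun x : EuclideanSpace ℂ (Fin n) => ‖B x‖) '' {x | ‖x‖ = 1})

set_option maxHeartbeats 1000000

lemma stmt4_key (n d : ℕ) (hn : 0 < n)
    (A B : EuclideanSpace ℂ (Fin n) →L[ℂ] Hsp d)
    (M : EuclideanSpace ℂ (Fin (n + n)) →L[ℂ] Hsp d)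
    (hMdef : ∀ x y : EuclideanSpace ℂ (Fin n),
      M (WithLp.toLp 2 (fun i => Fin.addCases (fun i => x i) (fun j => y j) i)) = B x + A y)
    (U : EuclideanSpace ℂ (Fin (n + n)) →L[ℂ] Hsp d)
    (hU : (ContinuousLinearMap.adjoint U).comp U
      = ContinuousLinearMap.id ℂ (EuclideanSpace ℂ (Fin (n + n))))
    (V : Matrix (Fin (n + n)) (Fin (n + n)) ℂ) (hV : Vᴴ * V = 1)
    (σ : Fin (n + n) → ℝ) (hσmono : Antitone σ) (hσ0 : ∀ i, 0 ≤ σ i)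
    (hSVD : ∀ w, M w = U (Matrix.toEuclideanLin (Matrix.diagonal fun i => (σ i : ℂ))
        (Matrix.toEuclideanLin Vᴴ w)))
    (hgap : σ ⟨n, Nat.lt_add_of_pos_right hn⟩ < sigMin B)
    (m : Fin (n + n)) (hm : σ m ≤ σ ⟨n, Nat.lt_add_of_pos_right hn⟩)
    (w : EuclideanSpace ℂ (Fin (n + n))) (hw : w ≠ 0)
    (hw2 : ∀ j : Fin n, w (Fin.natAdd n j) = 0)
    (hz : ∀ i : Fin (n + n), (i : ℕ) < (m : ℕ) → Matrix.toEuclideanLin Vᴴ w i = 0) :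
    False := by
  classical
  set σn := σ ⟨n, Nat.lt_add_of_pos_right hn⟩ with hσn
  have hσn0 : 0 ≤ σn := hσ0 _
  set x : EuclideanSpace ℂ (Fin n) := WithLp.toLp 2 (fun j => w (Fin.castAdd n j)) with hxdef
  have hwx : w = WithLp.toLp 2 (fun i => Fin.addCases (fun i => x i) (fun j => (0 : EuclideanSpace ℂ (Fin n)) j) i) := by
    ext i
    simp only [WithLp.ofLp_toLp]
    refine Fin.addCases (fun j => ?_) (fun j => ?_) i
    · rw [Fin.addCases_left]
    · rw [Fin.addCases_right]
      exact hw2 j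
  have hMw : M w = B x := by
    conv_lhs => rw [hwx]
    rw [hMdef x 0, map_zero, add_zero]
  have hx : x ≠ 0 := by
    intro h0
    apply hw
    rw [hwx, h0]
    ext i
    simp only [WithLp.ofLp_toLp]
    refine Fin.addCases (fun j => ?_) (fun j => ?_) i
    · rw [Fin.addCases_left]
      rfl
    · rw [Fin.addCases_right]
      rfl
  have hxn : (0:ℝ) < ‖x‖ := norm_pos_iff.mpr hx
  have hBx : σn * ‖x‖ < ‖B x‖ := by
    set u : EuclideanSpace ℂ (Fin n) := ((‖x‖ : ℂ))⁻¹ • x with hu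
    have hun : ‖u‖ = 1 := by
      rw [hu, norm_smul, norm_inv, Complex.norm_real, norm_norm, inv_mul_cancel₀ hxn.ne']
    have h1 : sigMin B ≤ ‖B u‖ := by
      apply csInf_le
      · exact ⟨0, fun r hr => by
          obtain ⟨y, -, rfl⟩ := hr
          exact norm_nonneg _⟩
      · exact ⟨u, hun, rfl⟩
    have h2 : ‖B u‖ = ‖x‖⁻¹ * ‖B x‖ := by
      rw [hu, _root_.map_smul, norm_smul, norm_inv, Complex.norm_real, norm_norm]
    have h3 := hgap.trans_le h1
    rw [h2] at h3
    calc σn * ‖x‖ < (‖x‖⁻¹ * ‖B x‖) * ‖x‖ := mul_lt_mul_of_pos_right h3 hxn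
      _ = ‖B x‖ := by field_simp
  have hUnorm : ∀ v, ‖U v‖ = ‖v‖ := by
    intro v
    have h : (inner ℂ (U v) (U v) : ℂ) = inner ℂ v v := by
      rw [← ContinuousLinearMap.adjoint_inner_left]
      have h4 : ContinuousLinearMap.adjoint U (U v) = v := by
        have := congrArg (fun T => T v) hU
        simpa using this
      rw [h4]
    have h5 := congrArg (RCLike.re (K := ℂ)) h
    rw [inner_self_eq_norm_sq, inner_self_eq_norm_sq] at h5
    nlinarith [norm_nonneg (U v), norm_nonneg v]
  set z : EuclideanSpace ℂ (Fin (n + n)) := Matrix.toEuclideanLin Vᴴ w with hzdef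
  have hVV : V * Vᴴ = 1 := mul_eq_one_comm.mp hV
  have hVz : Matrix.toEuclideanLin V z = w := by
    rw [hzdef, Matrix.toEuclideanLin_apply, Matrix.toEuclideanLin_apply,
      WithLp.ofLp_toLp, Matrix.mulVec_mulVec, hVV, Matrix.one_mulVec,
      WithLp.toLp_ofLp]
  have hzw : ‖z‖ = ‖w‖ := by
    have h : (inner ℂ z z : ℂ) = inner ℂ w w := by
      nth_rewrite 1 [hzdef]
      rw [Matrix.toEuclideanLin_conjTranspose_eq_adjoint, LinearMap.adjoint_inner_left, hVz]
    have h5 := congrArg (RCLike.re (K := ℂ)) h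
    rw [inner_self_eq_norm_sq, inner_self_eq_norm_sq] at h5
    nlinarith [norm_nonneg z, norm_nonneg w]
  have hwnorm : ‖w‖ = ‖x‖ := by
    have h1 : ‖w‖ ^ 2 = ∑ i, ‖w i‖ ^ 2 := by
      rw [EuclideanSpace.norm_eq, Real.sq_sqrt (by positivity)]
    have h2 : ‖x‖ ^ 2 = ∑ i, ‖x i‖ ^ 2 := by
      rw [EuclideanSpace.norm_eq, Real.sq_sqrt (by positivity)]
    have h3 : ‖w‖ ^ 2 = ‖x‖ ^ 2 := by
      rw [h1, h2, Fin.sum_univ_add (f := fun i => ‖w i‖ ^ 2)]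
      simp [hw2, hxdef]
    nlinarith [norm_nonneg w, norm_nonneg x]
  have hzsum : ‖z‖ ^ 2 = ∑ i, ‖z i‖ ^ 2 := by
    rw [EuclideanSpace.norm_eq, Real.sq_sqrt (by positivity)]
  have hMw2 : ‖M w‖ ^ 2 ≤ σn ^ 2 * ‖z‖ ^ 2 := by
    rw [hSVD w, hUnorm]
    have hD : ∀ i, (Matrix.toEuclideanLin (Matrix.diagonal fun i => (σ i : ℂ))
        (Matrix.toEuclideanLin Vᴴ w)) i = (σ i : ℂ) * z i := by
      intro i
      rw [hzdef, Matrix.toEuclideanLin_apply, PiLp.toLp_apply,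
        Matrix.mulVec_diagonal]
    have h1 : ‖Matrix.toEuclideanLin (Matrix.diagonal fun i => (σ i : ℂ))
        (Matrix.toEuclideanLin Vᴴ w)‖ ^ 2 = ∑ i, (σ i) ^ 2 * ‖z i‖ ^ 2 := by
      rw [EuclideanSpace.norm_eq, Real.sq_sqrt (by positivity)]
      congr 1
      funext i
      rw [hD i, norm_mul, Complex.norm_real, mul_pow, Real.norm_eq_abs, sq_abs]
    rw [h1, hzsum, Finset.mul_sum]
    apply Finset.sum_le_sum
    intro i _
    by_cases hi : (i : ℕ) < (m : ℕ)
    · rw [show z i = 0 from hz i hi]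
      simp
    · push_neg at hi
      have hσi : σ i ≤ σn := le_trans (hσmono (show m ≤ i from hi)) hm
      have hsq : σ i ^ 2 ≤ σn ^ 2 := pow_le_pow_left₀ (hσ0 i) hσi 2
      exact mul_le_mul_of_nonneg_right hsq (sq_nonneg _)
  rw [hMw] at hMw2
  have hlt : (σn * ‖x‖) ^ 2 < ‖B x‖ ^ 2 := by
    apply pow_lt_pow_left₀ hBx (by positivity)
    norm_num
  rw [hzw, hwnorm] at hMw2
  nlinarith


/-- Let `M = [B A] : ℂ^{2n} → H` have the SVD `M = U ∘ Σ ∘ V*`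
(`U* ∘ U = id`, `V` unitary, `Σ = diag(σ_0 ≥ … ≥ σ_{2n-1} ≥ 0)`).  If
`σ_min(B) > σ_n`, then the diagonal blocks `V₁₁` and `V₂₂` of `V` are invertible
and `σ_{n-1} > σ_n`. -/
theorem stmt4 (n d : ℕ) (hn : 0 < n)
    (A B : EuclideanSpace ℂ (Fin n) →L[ℂ] Hsp d)
    (M : EuclideanSpace ℂ (Fin (n + n)) →L[ℂ] Hsp d)
    (hMdef : ∀ x y : EuclideanSpace ℂ (Fin n),
      M (WithLp.toLp 2 (fun i => Fin.addCases (fun i => x i) (fun j => y j) i)) = B x + A y)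
    (U : EuclideanSpace ℂ (Fin (n + n)) →L[ℂ] Hsp d)
    (hU : (ContinuousLinearMap.adjoint U).comp U
      = ContinuousLinearMap.id ℂ (EuclideanSpace ℂ (Fin (n + n))))
    (V : Matrix (Fin (n + n)) (Fin (n + n)) ℂ) (hV : Vᴴ * V = 1)
    (σ : Fin (n + n) → ℝ) (hσmono : Antitone σ) (hσ0 : ∀ i, 0 ≤ σ i)
    (hSVD : ∀ w, M w = U (Matrix.toEuclideanLin (Matrix.diagonal fun i => (σ i : ℂ))
        (Matrix.toEuclideanLin Vᴴ w)))
    (hgap : σ ⟨n, by omega⟩ < sigMin B) :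
    IsUnit (Matrix.of fun i j : Fin n => V (Fin.castAdd n i) (Fin.castAdd n j)) ∧
    IsUnit (Matrix.of fun i j : Fin n => V (Fin.natAdd n i) (Fin.natAdd n j)) ∧
    σ ⟨n, by omega⟩ < σ ⟨n - 1, by omega⟩ := by
  classical
  -- Part 1 : V₁₁ invertible
  have h11 : IsUnit (Matrix.of fun i j : Fin n => V (Fin.castAdd n i) (Fin.castAdd n j)) := by
    set V11 : Matrix (Fin n) (Fin n) ℂ :=
      Matrix.of (fun i j : Fin n => V (Fin.castAdd n i) (Fin.castAdd n j)) with hV11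
    rw [Matrix.isUnit_iff_isUnit_det, isUnit_iff_ne_zero]
    intro hdet
    have hdetH : (V11ᴴ).det = 0 := by rw [Matrix.det_conjTranspose, hdet, star_zero]
    obtain ⟨v, hv0, hv⟩ := Matrix.exists_mulVec_eq_zero_iff.mpr hdetH
    set w : EuclideanSpace ℂ (Fin (n + n)) :=
      (WithLp.equiv 2 _).symm
        (fun i => Fin.addCases (fun j => v j) (fun _ => (0:ℂ)) i) with hwdef
    have hw2 : ∀ j : Fin n, w (Fin.natAdd n j) = 0 := by
      intro j
      exact Fin.addCases_right (motive := fun _ : Fin (n+n) => ℂ)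
        (left := fun j => v j) (right := fun _ => (0:ℂ)) j
    have hwne : w ≠ 0 := by
      intro h0
      apply hv0
      funext j
      have h1 : v j = w (Fin.castAdd n j) :=
        (Fin.addCases_left (motive := fun _ : Fin (n+n) => ℂ)
          (left := fun j => v j) (right := fun _ => (0:ℂ)) j).symm
      rw [h1, h0]
      rfl
    have hz : ∀ i : Fin (n + n), (i : ℕ) < n → Matrix.toEuclideanLin Vᴴ w i = 0 := by
      intro i hi
      have hieq : i = Fin.castAdd n ⟨(i : ℕ), hi⟩ := Fin.ext rfl
      have h0 : (V11ᴴ *ᵥ v) ⟨(i : ℕ), hi⟩ = 0 := by rw [hv]; rfl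
      rw [Matrix.toEuclideanLin_apply, PiLp.toLp_apply, ← h0]
      conv_lhs => rw [hieq]
      simp only [hwdef, Matrix.mulVec, dotProduct, Matrix.conjTranspose_apply, hV11,
        Matrix.of_apply, Fin.sum_univ_add, Equiv.apply_symm_apply, WithLp.equiv_symm_apply, WithLp.ofLp_toLp,
        Fin.addCases_left, Fin.addCases_right,
        mul_zero, Finset.sum_const_zero, add_zero]
    exact absurd (stmt4_key n d hn A B M hMdef U hU V hV σ hσmono hσ0 hSVD hgap
      ⟨n, by omega⟩ le_rfl w hwne hw2 hz) (by simp)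
  -- Part 2 : V₂₂ invertible
  have h22 : IsUnit (Matrix.of fun i j : Fin n => V (Fin.natAdd n i) (Fin.natAdd n j)) := by
    set V22 : Matrix (Fin n) (Fin n) ℂ :=
      Matrix.of (fun i j : Fin n => V (Fin.natAdd n i) (Fin.natAdd n j)) with hV22
    rw [Matrix.isUnit_iff_isUnit_det, isUnit_iff_ne_zero]
    intro hdet
    obtain ⟨c, hc0, hc⟩ := Matrix.exists_mulVec_eq_zero_iff.mpr hdet
    set c' : Fin (n + n) → ℂ :=
      (fun i => Fin.addCases (fun _ => (0:ℂ)) (fun j => c j) i) with hc'def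
    set w : EuclideanSpace ℂ (Fin (n + n)) := (WithLp.equiv 2 _).symm (V *ᵥ c') with hwdef
    have hzw : Matrix.toEuclideanLin Vᴴ w = (WithLp.equiv 2 _).symm c' := by
      rw [hwdef, Matrix.toEuclideanLin_apply]
      simp only [WithLp.equiv_symm_apply, WithLp.ofLp_toLp,
        Matrix.mulVec_mulVec, hV, Matrix.one_mulVec]
    have hw2 : ∀ j : Fin n, w (Fin.natAdd n j) = 0 := by
      intro j
      show (V *ᵥ c') (Fin.natAdd n j) = 0
      have h0 : (V22 *ᵥ c) j = 0 := by rw [hc]; rfl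
      rw [← h0]
      show (V *ᵥ c') (Fin.natAdd n j) = _
      simp only [Matrix.mulVec, dotProduct, hc'def, hV22, Matrix.of_apply,
        Fin.sum_univ_add, Fin.addCases_left, Fin.addCases_right,
        mul_zero, zero_add, Finset.sum_const_zero]
    have hwne : w ≠ 0 := by
      intro h0
      apply hc0
      have hz0 : Matrix.toEuclideanLin Vᴴ w = 0 := by rw [h0, map_zero]
      rw [hzw] at hz0
      funext j
      have h1 : c j = ((WithLp.equiv 2 (Fin (n+n) → ℂ)).symm c') (Fin.natAdd n j) :=
        (Fin.addCases_right (motive := fun _ : Fin (n+n) => ℂ)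
          (left := fun _ => (0:ℂ)) (right := fun j => c j) j).symm
      rw [h1, hz0]
      rfl
    have hz : ∀ i : Fin (n + n), (i : ℕ) < n → Matrix.toEuclideanLin Vᴴ w i = 0 := by
      intro i hi
      rw [hzw]
      show c' i = 0
      have hieq : i = Fin.castAdd n ⟨(i : ℕ), hi⟩ := Fin.ext rfl
      rw [hieq]
      exact Fin.addCases_left (motive := fun _ : Fin (n+n) => ℂ)
        (left := fun _ => (0:ℂ)) (right := fun j => c j) ⟨(i : ℕ), hi⟩
    exact absurd (stmt4_key n d hn A B M hMdef U hU V hV σ hσmono hσ0 hSVD hgap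
      ⟨n, by omega⟩ le_rfl w hwne hw2 hz) (by simp)
  -- Part 3 : spectral gap
  refine ⟨h11, h22, ?_⟩
  by_contra hcon
  push_neg at hcon
  have hn1 : (n - 1 : ℕ) ≤ n + n := by omega
  set e : EuclideanSpace ℂ (Fin (n + n)) →ₗ[ℂ] (Fin (n + n) → ℂ) :=
    (WithLp.linearEquiv 2 ℂ _).toLinearMap with hedef
  set g : EuclideanSpace ℂ (Fin (n + n)) →ₗ[ℂ] (Fin n → ℂ) :=
    (LinearMap.funLeft ℂ ℂ (Fin.natAdd n)).comp e with hgdef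
  set f : EuclideanSpace ℂ (Fin (n + n)) →ₗ[ℂ] (Fin (n - 1) → ℂ) :=
    (LinearMap.funLeft ℂ ℂ (fun i : Fin (n - 1) => Fin.castLE hn1 i)).comp
      (e.comp (Matrix.toEuclideanLin Vᴴ)) with hfdef
  have hfr : Module.finrank ℂ (EuclideanSpace ℂ (Fin (n + n))) = n + n := by
    simp [finrank_euclideanSpace]
  have hgrank := LinearMap.finrank_range_add_finrank_ker g
  have hgr : Module.finrank ℂ (LinearMap.range g) ≤ n := by
    refine le_trans (Submodule.finrank_le _) ?_
    simp
  have hfrank := LinearMap.finrank_range_add_finrank_ker f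
  have hfr2 : Module.finrank ℂ (LinearMap.range f) ≤ n - 1 := by
    refine le_trans (Submodule.finrank_le _) ?_
    simp
  rw [hfr] at hgrank hfrank
  have hsum := Submodule.finrank_sup_add_finrank_inf_eq (LinearMap.ker g) (LinearMap.ker f)
  have hsup : Module.finrank ℂ ↥(LinearMap.ker g ⊔ LinearMap.ker f) ≤ n + n := by
    refine le_trans (Submodule.finrank_le _) ?_
    rw [hfr]
  have hinf : 0 < Module.finrank ℂ ↥(LinearMap.ker g ⊓ LinearMap.ker f) := by omega
  obtain ⟨wv, hwv⟩ := Module.finrank_pos_iff_exists_ne_zero.mp hinf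
  have hmem := wv.2
  rw [Submodule.mem_inf] at hmem
  obtain ⟨hmg, hmf⟩ := hmem
  rw [LinearMap.mem_ker] at hmg hmf
  set w : EuclideanSpace ℂ (Fin (n + n)) := (wv : EuclideanSpace ℂ (Fin (n + n))) with hwdef
  have hwne : w ≠ 0 := fun h => hwv (Subtype.ext h)
  have hw2 : ∀ j : Fin n, w (Fin.natAdd n j) = 0 := by
    intro j
    exact congrFun hmg j
  have hz : ∀ i : Fin (n + n), (i : ℕ) < n - 1 → Matrix.toEuclideanLin Vᴴ w i = 0 := by
    intro i hi
    have h1 := congrFun hmf (⟨(i : ℕ), hi⟩ : Fin (n - 1))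
    have hieq : Fin.castLE hn1 (⟨(i : ℕ), hi⟩ : Fin (n - 1)) = i := by
      apply Fin.ext
      rfl
    rw [show (0 : Fin (n-1) → ℂ) ⟨(i : ℕ), hi⟩ = 0 from rfl] at h1
    rw [← hieq]
    exact h1
  exact stmt4_key n d hn A B M hMdef U hU V hV σ hσmono hσ0 hSVD hgap
    ⟨n - 1, by omega⟩ hcon w hwne hw2 hz
end

section
/- Let A, B ∈ ℂ^{m×n} and suppose the concatenated matrix [A B] ∈ ℂ^{m×2n} has the (thin) SVD [A B] = U Σ V*, where U ∈ ℂ^{m×2n} satisfies U* U = I_{2n}, V ∈ ℂ^{2n×2n} is unitary, and Σ = diag(σ_1, …, σ_{2n}) with σ_1 ≥ … ≥ σ_{2n} ≥ 0. Write U = [U₁ U₂] with U₁ ∈ ℂ^{m×n} the first n columns, Σ₁ := diag(σ_1,…,σ_n), and partition V into n×n blocks [[V₁₁,V₁₂],[V₂₁,V₂₂]]. Then U₁* A = Σ₁ V₁₁* and U₁* B = Σ₁ V₂₁*. Consequently, if Σ₁ is invertible, then for any X ∈ ℂ^{n×n} and diagonal Λ ∈ ℂ^{n×n}, the equation V₁₁*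 X = V₂₁* X Λ holds if and only if (U₁* A) X = (U₁* B) X Λ; that is, the Ito–Murota generalized eigenvalue problem is equivalent to the problem projected onto the leading n left singular vectors of [A B]. -/
open Matrix

/-- Let `[A B] = U Σ V*` be a thin SVD of the concatenation of
`A, B ∈ ℂ^{m×n}` (`U* U = I`, `V` unitary, `Σ = diag(σ₁ ≥ … ≥ σ_{2n} ≥ 0)`), with
`U₁` the first `n` columns of `U`, `Σ₁ = diag(σ₁,…,σ_n)`, and `V₁₁`, `V₂₁` the
left blocks of `V`.  Then `U₁* A = Σ₁ V₁₁*` and `U₁* B = Σ₁ V₂₁*`; consequently,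
if `Σ₁` is invertible, the Ito-Murota pencil equation `V₁₁* X = V₂₁* X Λ` (for any
`X` and diagonal `Λ`) is equivalent to the projected equation
`(U₁* A) X = (U₁* B) X Λ`. -/
theorem stmt17 (m n : ℕ) (A B : Matrix (Fin m) (Fin n) ℂ)
    (U : Matrix (Fin m) (Fin n ⊕ Fin n) ℂ) (hU : Uᴴ * U = 1)
    (V : Matrix (Fin n ⊕ Fin n) (Fin n ⊕ Fin n) ℂ) (hV : Vᴴ * V = 1)
    (σ : Fin n ⊕ Fin n → ℝ) (hσ0 : ∀ i, 0 ≤ σ i)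
    (hσmono : Antitone fun i : Fin (n + n) => σ (finSumFinEquiv.symm i))
    (hSVD : Matrix.fromCols A B = U * Matrix.diagonal (fun i => (σ i : ℂ)) * Vᴴ) :
    (U.toCols₁ᴴ * A
        = Matrix.diagonal (fun i : Fin n => (σ (Sum.inl i) : ℂ)) * V.toBlocks₁₁ᴴ) ∧
    (U.toCols₁ᴴ * B
        = Matrix.diagonal (fun i : Fin n => (σ (Sum.inl i) : ℂ)) * V.toBlocks₂₁ᴴ) ∧
    (IsUnit (Matrix.diagonal (fun i : Fin n => (σ (Sum.inl i) : ℂ))) →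
      ∀ (X Λ : Matrix (Fin n) (Fin n) ℂ), Λ.IsDiag →
        (V.toBlocks₁₁ᴴ * X = V.toBlocks₂₁ᴴ * X * Λ ↔
          U.toCols₁ᴴ * A * X = U.toCols₁ᴴ * B * X * Λ)) := by
  set D : Matrix (Fin n) (Fin n) ℂ :=
    Matrix.diagonal (fun i : Fin n => (σ (Sum.inl i) : ℂ)) with hD
  have key : Uᴴ * Matrix.fromCols A B
      = Matrix.diagonal (fun i => (σ i : ℂ)) * Vᴴ := by
    rw [hSVD, ← Matrix.mul_assoc, ← Matrix.mul_assoc, hU, Matrix.one_mul]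
  have h1 : U.toCols₁ᴴ * A = D * V.toBlocks₁₁ᴴ := by
    ext i j
    have := congrFun (congrFun key (Sum.inl i)) (Sum.inl j)
    simpa [Matrix.mul_apply, Matrix.fromCols, Matrix.toCols₁,
      Matrix.toBlocks₁₁, Matrix.diagonal_apply, Matrix.conjTranspose_apply, hD,
      Finset.mul_sum, mul_comm] using this
  have h2 : U.toCols₁ᴴ * B = D * V.toBlocks₂₁ᴴ := by
    ext i j
    have := congrFun (congrFun key (Sum.inl i)) (Sum.inr j)
    simpa [Matrix.mul_apply, Matrix.fromCols, Matrix.toCols₁,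
      Matrix.toBlocks₂₁, Matrix.diagonal_apply, Matrix.conjTranspose_apply, hD,
      Finset.mul_sum, mul_comm] using this
  refine ⟨h1, h2, ?_⟩
  intro hDu X Λ _
  have hdet : IsUnit D.det := (Matrix.isUnit_iff_isUnit_det D).mp hDu
  constructor
  · intro h
    rw [h1, h2]
    simp only [Matrix.mul_assoc] at h ⊢
    rw [h]
  · intro h
    rw [h1, h2] at h
    simp only [Matrix.mul_assoc] at h ⊢
    exact hDu.mul_left_cancel h
end
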